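/- Let T1 = T(r1, s1) and T2 = T(r2, s2) be equivalent trees, where r1 ≤ s1 and r2 ≤ s2 are nonnegative rationals. If every rational number in the interval [r2, s2] appears in T2, then every rational number in the interval [r1, s1] appears in T1. -/

import Mathlib

/-- The mediant of two rationals `p` and `q`: `(num p + num q) / (den p + den q)`. -/
def mediant (p q : ℚ) : ℚ := ((p.num + q.num : ℤ) : ℚ) / ((p.den + q.den : ℕ) : ℚ)

/-- Insert between every pair of consecutive entries of a list their mediant. -/
def insertMediants : List ℚ → List ℚ
  | [] => []
  | [p] => [p]
  | p :: q :: rest => p :: mediant p q :: insertMediants (q :: rest)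

/-- The sequences of the tree `T(r, s)`: `S r s 0 = [r, s]`, and each successive
sequence is obtained by inserting mediants between consecutive entries. -/
def S (r s : ℚ) : ℕ → List ℚ
  | 0 => [r, s]
  | n + 1 => insertMediants (S r s n)


/-- Two trees `T(r1, s1)` and `T(r2, s2)` are equivalent if the mediant inserted at each
position reduces by exactly the same factor in both trees: for every row `n` and every
`j`-th consecutive pair `(p, q)` of `S r1 s1 n` and `(p', q')` of `S r2 s2 n`,
`gcd (num p + num q) (den p + den q) = gcd (num p' + num q') (den p' + den q')`. -/
def TreesEquiv (r1 s1 r2 s2 : ℚ) : Prop :=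
  ∀ n j, (h1 : j + 1 < (S r1 s1 n).length) → (h2 : j + 1 < (S r2 s2 n).length) →
    Int.gcd ((S r1 s1 n)[j].num + (S r1 s1 n)[j + 1].num)
            (((S r1 s1 n)[j].den : ℤ) + ((S r1 s1 n)[j + 1].den : ℤ)) =
    Int.gcd ((S r2 s2 n)[j].num + (S r2 s2 n)[j + 1].num)
            (((S r2 s2 n)[j].den : ℤ) + ((S r2 s2 n)[j + 1].den : ℤ))

/-! ### Auxiliary lemmas -/

theorem im_length : (L : List ℚ) → (insertMediants L).length = 2 * L.length - 1
  | [] => by simp [insertMediants]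
  | [p] => by simp [insertMediants]
  | p :: q :: rest => by
    have ih := im_length (q :: rest)
    simp [insertMediants] at ih ⊢
    omega

theorem im_get_even : (L : List ℚ) → (k : ℕ) → (h : k < L.length) →
    (h2 : 2 * k < (insertMediants L).length) → (insertMediants L)[2 * k] = L[k]
  | [], k, h, h2 => by simp at h
  | [p], k, h, h2 => by
    have hk : k = 0 := by simpa using h
    subst hk; simp [insertMediants]
  | p :: q :: rest, 0, h, h2 => by simp [insertMediants]
  | p :: q :: rest, k + 1, h, h2 => by
    have h' : k < (q :: rest).length := by simpa using h
    have h2' : 2 * k < (insertMediants (q :: rest)).length := by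
      simp only [insertMediants, List.length_cons] at h2 ⊢; omega
    have ih := im_get_even (q :: rest) k h' h2'
    show (p :: mediant p q :: insertMediants (q :: rest))[2 * (k+1)] = (p :: q :: rest)[k+1]
    simp only [show 2 * (k+1) = 2*k + 1 + 1 from by ring, List.getElem_cons_succ]
    exact ih

theorem im_get_odd : (L : List ℚ) → (k : ℕ) → (h : k + 1 < L.length) →
    (h2 : 2 * k + 1 < (insertMediants L).length) →
    (insertMediants L)[2 * k + 1] = mediant (L[k]'(by omega)) (L[k+1]'h)
  | [], k, h, h2 => by simp at h
  | [p], k, h, h2 => by simp at h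
  | p :: q :: rest, 0, h, h2 => by simp [insertMediants]
  | p :: q :: rest, k + 1, h, h2 => by
    have h' : k + 1 < (q :: rest).length := by simpa using h
    have h2' : 2 * k + 1 < (insertMediants (q :: rest)).length := by
      simp only [insertMediants, List.length_cons] at h2 ⊢; omega
    have ih := im_get_odd (q :: rest) k h' h2'
    show (p :: mediant p q :: insertMediants (q :: rest))[2 * (k+1) + 1] = _
    simp only [show 2 * (k+1) + 1 = 2*k + 1 + 1 + 1 from by ring, List.getElem_cons_succ]
    exact ih

theorem lenS (r s : ℚ) : (n : ℕ) → (S r s n).length = 2 ^ n + 1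
  | 0 => by simp [S]
  | n + 1 => by
    have ih := lenS r s n
    show (insertMediants (S r s n)).length = _
    rw [im_length, ih]; ring_nf; omega

theorem rat_gcd_one (q : ℚ) : Int.gcd q.num (q.den : ℤ) = 1 := by
  have := q.reduced
  simpa [Int.gcd, Int.natAbs_natCast] using this

theorem div_num_den (u w : ℤ) (hw : 0 < w) :
    ((Int.gcd u w : ℤ)) * ((u : ℚ) / (w : ℚ)).num = u ∧
    ((Int.gcd u w : ℤ)) * (((u : ℚ) / (w : ℚ)).den : ℤ) = w := by
  set q : ℚ := (u : ℚ) / (w : ℚ) with hq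
  have hden : (0:ℤ) < (q.den : ℤ) := by exact_mod_cast q.pos
  have hwq : (w : ℚ) ≠ 0 := by exact_mod_cast hw.ne'
  have hdq : ((q.den : ℤ) : ℚ) ≠ 0 := by exact_mod_cast hden.ne'
  have h1 : q.num * w = u * (q.den : ℤ) := by
    have h0 : ((q.num : ℤ) : ℚ) / ((q.den : ℤ) : ℚ) = (u : ℚ) / (w : ℚ) := by
      push_cast; rw [Rat.num_div_den]
    rw [div_eq_div_iff hdq hwq] at h0
    exact_mod_cast h0
  have hcop : IsCoprime (q.den : ℤ) q.num := by
    rw [Int.isCoprime_iff_gcd_eq_one, Int.gcd_comm]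
    exact rat_gcd_one q
  have hdvd : (q.den : ℤ) ∣ w := by
    refine hcop.dvd_of_dvd_mul_left ⟨u, ?_⟩
    rw [mul_comm (q.den : ℤ) u, ← h1]
  obtain ⟨k, hk⟩ := hdvd
  have hk0 : 0 < k := by nlinarith
  have hu : u = q.num * k := by
    have : (q.num * k) * (q.den : ℤ) = u * (q.den : ℤ) := by
      rw [← h1, hk]; ring
    exact (mul_right_cancel₀ hden.ne' this).symm
  have hg : Int.gcd u w = k.natAbs := by
    rw [hu, hk, mul_comm q.num k, mul_comm (q.den : ℤ) k, Int.gcd_mul_left, rat_gcd_one, mul_one]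
  have hkabs : (k.natAbs : ℤ) = k := Int.natAbs_of_nonneg hk0.le
  constructor
  · rw [hg, hkabs, hu]; ring
  · rw [hg, hkabs, hk]; ring

theorem mediant_cast (p q : ℚ) :
    mediant p q = ((p.num + q.num : ℤ) : ℚ) / ((((p.den : ℤ) + (q.den : ℤ) : ℤ)) : ℚ) := by
  unfold mediant; push_cast; ring_nf

theorem mediant_num_den (p q : ℚ) :
    ((Int.gcd (p.num + q.num) ((p.den : ℤ) + (q.den : ℤ)) : ℤ)) * (mediant p q).num
        = p.num + q.num ∧
    ((Int.gcd (p.num + q.num) ((p.den : ℤ) + (q.den : ℤ)) : ℤ)) * ((mediant p q).den : ℤ)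
        = (p.den : ℤ) + (q.den : ℤ) := by
  have hw : (0:ℤ) < (p.den : ℤ) + (q.den : ℤ) := by
    have := p.pos; have := q.pos; positivity
  have := div_num_den (p.num + q.num) ((p.den : ℤ) + (q.den : ℤ)) hw
  rwa [← mediant_cast] at this

theorem mediant_self (c : ℚ) : mediant c c = c := by
  rw [mediant_cast]
  rw [show c.num + c.num = 2 * c.num from by ring,
    show (c.den:ℤ) + (c.den:ℤ) = 2 * (c.den:ℤ) from by ring]
  push_cast
  rw [mul_div_mul_left _ _ (two_ne_zero)]
  exact c.num_div_den

theorem rat_eq_iff (p q : ℚ) : p = q ↔ p.num * (q.den : ℤ) = q.num * (p.den : ℤ) := by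
  constructor
  · rintro rfl; ring
  · intro h
    have hp : ((p.den:ℤ):ℚ) ≠ 0 := by exact_mod_cast (Int.natCast_pos.mpr p.pos).ne'
    have hq : ((q.den:ℤ):ℚ) ≠ 0 := by exact_mod_cast (Int.natCast_pos.mpr q.pos).ne'
    have : ((p.num:ℤ):ℚ) / ((p.den:ℤ):ℚ) = ((q.num:ℤ):ℚ) / ((q.den:ℤ):ℚ) := by
      rw [div_eq_div_iff hp hq]; exact_mod_cast h
    simpa [Rat.num_div_den] using this

theorem cancel_lemma (M11 M12 M21 M22 t u v U V N Dy nu de D2 : ℤ)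
    (ht : t ≠ 0) (hD2 : D2 ≠ 0)
    (hdet : M11 * M22 - M12 * M21 = t * D2)
    (G1 : (-t) * (M11 * u + M12 * v) = t * nu)
    (G2 : (-t) * (M21 * u + M22 * v) = t * de)
    (F1 : M11 * U + M12 * V = t * N)
    (F2 : M21 * U + M22 * V = t * Dy)
    (F3 : N * de = nu * Dy) : u * V = U * v := by
  have key : (-t) * (t * D2) * (u * V - U * v) = 0 := by
    linear_combination (M21*U + M22*V) * G1 - (M11*U + M12*V) * G2 + (t*nu) * F2
      - (t*de) * F1 - t*t*F3 + t*(u*V - U*v) * hdet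
  have h1 : (-t) * (t * D2) ≠ 0 := by
    exact mul_ne_zero (neg_ne_zero.mpr ht) (mul_ne_zero ht hD2)
  have := (mul_eq_zero.mp key).resolve_left h1
  linarith [sub_eq_zero.mp this]

theorem im_const (c : ℚ) : (L : List ℚ) → (∀ z ∈ L, z = c) → ∀ z ∈ insertMediants L, z = c
  | [], _ => by simp [insertMediants]
  | [p], h => by simpa [insertMediants] using h
  | p :: q :: rest, h => by
    intro z hz
    simp only [insertMediants, List.mem_cons] at hz
    have hp := h p (by simp)
    have hq := h q (by simp)
    rcases hz with rfl | rfl | hz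
    · exact hp
    · rw [hp, hq, mediant_self]
    · exact im_const c (q :: rest) (fun w hw => h w (List.mem_cons_of_mem _ hw)) z hz

/-- The main invariant: an integer matrix relation between corresponding entries
of two equivalent trees propagates from the top row to all rows. -/
theorem invariant (r1 s1 r2 s2 : ℚ) (hequiv : TreesEquiv r1 s1 r2 s2)
    (M11 M12 M21 M22 t : ℤ)
    (hb0 : M11 * r1.num + M12 * (r1.den:ℤ) = t * r2.num)
    (hb1 : M21 * r1.num + M22 * (r1.den:ℤ) = t * (r2.den:ℤ))
    (hb2 : M11 * s1.num + M12 * (s1.den:ℤ) = t * s2.num)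
    (hb3 : M21 * s1.num + M22 * (s1.den:ℤ) = t * (s2.den:ℤ)) :
    ∀ n j, (h1 : j < (S r1 s1 n).length) → (h2 : j < (S r2 s2 n).length) →
      (M11 * ((S r1 s1 n)[j]).num + M12 * (((S r1 s1 n)[j]).den:ℤ)
          = t * ((S r2 s2 n)[j]).num) ∧
      (M21 * ((S r1 s1 n)[j]).num + M22 * (((S r1 s1 n)[j]).den:ℤ)
          = t * (((S r2 s2 n)[j]).den:ℤ)) := by
  intro n
  induction n with
  | zero =>
    intro j h1 h2
    have hj : j < 2 := by simpa [S] using h1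
    interval_cases j
    · simpa [S] using ⟨hb0, hb1⟩
    · simpa [S] using ⟨hb2, hb3⟩
  | succ n ih =>
    intro j h1 h2
    have hl1 := lenS r1 s1 n
    have hl1' := lenS r1 s1 (n + 1)
    have hl2 := lenS r2 s2 n
    have hl2' := lenS r2 s2 (n + 1)
    rcases Nat.even_or_odd j with ⟨k, hk⟩ | ⟨k, hk⟩
    · have hk2 : j = 2 * k := by omega
      subst hk2
      have hkl1 : k < (S r1 s1 n).length := by omega
      have hkl2 : k < (S r2 s2 n).length := by omega
      have e1 : (S r1 s1 (n+1))[2*k]'h1 = (S r1 s1 n)[k]'hkl1 :=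
        im_get_even (S r1 s1 n) k hkl1 h1
      have e2 : (S r2 s2 (n+1))[2*k]'h2 = (S r2 s2 n)[k]'hkl2 :=
        im_get_even (S r2 s2 n) k hkl2 h2
      rw [e1, e2]
      exact ih k hkl1 hkl2
    · have hk2 : j = 2 * k + 1 := hk
      subst hk2
      have hkl1 : k + 1 < (S r1 s1 n).length := by omega
      have hkl2 : k + 1 < (S r2 s2 n).length := by omega
      have hkl1' : k < (S r1 s1 n).length := by omega
      have hkl2' : k < (S r2 s2 n).length := by omega
      have e1 : (S r1 s1 (n+1))[2*k+1]'h1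
          = mediant ((S r1 s1 n)[k]'hkl1') ((S r1 s1 n)[k+1]'hkl1) :=
        im_get_odd (S r1 s1 n) k hkl1 h1
      have e2 : (S r2 s2 (n+1))[2*k+1]'h2
          = mediant ((S r2 s2 n)[k]'hkl2') ((S r2 s2 n)[k+1]'hkl2) :=
        im_get_odd (S r2 s2 n) k hkl2 h2
      rw [e1, e2]
      obtain ⟨hp1, hp2⟩ := ih k hkl1' hkl2'
      obtain ⟨hq1, hq2⟩ := ih (k+1) hkl1 hkl2
      have hg := hequiv n k hkl1 hkl2
      have hm1 := mediant_num_den ((S r1 s1 n)[k]'hkl1') ((S r1 s1 n)[k+1]'hkl1)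
      have hm2 := mediant_num_den ((S r2 s2 n)[k]'hkl2') ((S r2 s2 n)[k+1]'hkl2)
      rw [← hg] at hm2
      have hwpos : (0:ℤ) < (((S r1 s1 n)[k]'hkl1').den : ℤ)
          + (((S r1 s1 n)[k+1]'hkl1).den : ℤ) := by
        have := ((S r1 s1 n)[k]'hkl1').pos
        have := ((S r1 s1 n)[k+1]'hkl1).pos
        positivity
      have hgne : ((Int.gcd (((S r1 s1 n)[k]'hkl1').num + ((S r1 s1 n)[k+1]'hkl1).num)
          ((((S r1 s1 n)[k]'hkl1').den : ℤ) + (((S r1 s1 n)[k+1]'hkl1).den : ℤ)) : ℕ) : ℤ) ≠ 0 := by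
        have : Int.gcd (((S r1 s1 n)[k]'hkl1').num + ((S r1 s1 n)[k+1]'hkl1).num)
            ((((S r1 s1 n)[k]'hkl1').den : ℤ) + (((S r1 s1 n)[k+1]'hkl1).den : ℤ)) ≠ 0 := by
          intro hzero
          rw [Int.gcd_eq_zero_iff] at hzero
          omega
        exact_mod_cast this
      constructor
      · apply mul_left_cancel₀ hgne
        linear_combination M11 * hm1.1 + M12 * hm1.2 + hp1 + hq1 - t * hm2.1
      · apply mul_left_cancel₀ hgne
        linear_combination M21 * hm1.1 + M22 * hm1.2 + hp2 + hq2 - t * hm2.2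

set_option maxHeartbeats 2000000 in
/-- If `T(r1, s1)` and `T(r2, s2)` are equivalent trees and every rational in `[r2, s2]`
appears in `T(r2, s2)`, then every rational in `[r1, s1]` appears in `T(r1, s1)`. -/
theorem equiv_trees_appears (r1 s1 r2 s2 : ℚ)
    (hr1 : 0 ≤ r1) (hrs1 : r1 ≤ s1) (hr2 : 0 ≤ r2) (hrs2 : r2 ≤ s2)
    (hequiv : TreesEquiv r1 s1 r2 s2)
    (hT2 : ∀ x : ℚ, r2 ≤ x → x ≤ s2 → ∃ n, x ∈ S r2 s2 n) :
    ∀ x : ℚ, r1 ≤ x → x ≤ s1 → ∃ n, x ∈ S r1 s1 n := by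
  intro x hx1 hx2
  rcases eq_or_lt_of_le hrs1 with heq1 | hlt1
  · refine ⟨0, ?_⟩
    have hx : x = r1 := le_antisymm (heq1 ▸ hx2) hx1
    simp [S, hx]
  rcases eq_or_lt_of_le hrs2 with heq2 | hlt2
  · -- degenerate case: r2 = s2; we derive a contradiction with r1 < s1
    exfalso
    subst heq2
    have hall : ∀ n, ∀ z ∈ S r2 r2 n, z = r2 := by
      intro n
      induction n with
      | zero =>
        intro z hz
        simp only [S, List.mem_cons, List.mem_singleton] at hz
        rcases hz with rfl | rfl | h
        · rfl
        · rfl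
        · simp at h
      | succ n ih => exact fun z hz => im_const r2 (S r2 r2 n) ih z hz
    have hlen2 : ∀ n, 1 < (S r1 s1 n).length := by
      intro n
      rw [lenS r1 s1 n]
      have : 0 < 2 ^ n := pow_pos (by norm_num) n
      omega
    have hlen0 : ∀ n, 0 < (S r1 s1 n).length := fun n => lt_trans one_pos (hlen2 n)
    have hg2 : ∀ n (h1 : 1 < (S r1 s1 n).length),
        Int.gcd (((S r1 s1 n)[0]'(hlen0 n)).num + ((S r1 s1 n)[1]'h1).num)
          ((((S r1 s1 n)[0]'(hlen0 n)).den : ℤ) + (((S r1 s1 n)[1]'h1).den : ℤ)) = 2 := by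
      intro n h1
      have h2 : 0 + 1 < (S r2 r2 n).length := by
        rw [lenS r2 r2 n]; have : 0 < 2 ^ n := pow_pos (by norm_num) n; omega
      have heq := hequiv n 0 h1 h2
      rw [heq, hall n _ (List.getElem_mem _), hall n _ (List.getElem_mem _)]
      rw [show r2.num + r2.num = 2 * r2.num from by ring,
        show (r2.den:ℤ) + (r2.den:ℤ) = 2 * (r2.den:ℤ) from by ring]
      rw [Int.gcd_mul_left, rat_gcd_one, mul_one]
      rfl
    have hdet : ∀ n : ℕ, s1.num * (r1.den:ℤ) - r1.num * (s1.den:ℤ)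
        = 2^n * (((S r1 s1 n)[1]'(hlen2 n)).num * (((S r1 s1 n)[0]'(hlen0 n)).den : ℤ)
            - ((S r1 s1 n)[0]'(hlen0 n)).num * (((S r1 s1 n)[1]'(hlen2 n)).den : ℤ)) := by
      intro n
      induction n with
      | zero => simp [S]
      | succ n ih =>
        have e0 : (S r1 s1 (n+1))[0]'(hlen0 (n+1)) = (S r1 s1 n)[0]'(hlen0 n) := by
          have h2 : 2 * 0 < (insertMediants (S r1 s1 n)).length := by
            simpa [S] using hlen0 (n+1)
          have := im_get_even (S r1 s1 n) 0 (hlen0 n) h2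
          simpa [S] using this
        have e1 : (S r1 s1 (n+1))[1]'(hlen2 (n+1))
            = mediant ((S r1 s1 n)[0]'(hlen0 n)) ((S r1 s1 n)[1]'(hlen2 n)) := by
          have h2 : 2 * 0 + 1 < (insertMediants (S r1 s1 n)).length := by
            simpa [S] using hlen2 (n+1)
          have := im_get_odd (S r1 s1 n) 0 (hlen2 n) h2
          simpa [S] using this
        have hg := hg2 n (hlen2 n)
        have hm := mediant_num_den ((S r1 s1 n)[0]'(hlen0 n)) ((S r1 s1 n)[1]'(hlen2 n))
        rw [hg] at hm
        push_cast at hm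
        rw [e0, e1]
        linear_combination ih - (2^n * (((S r1 s1 n)[0]'(hlen0 n)).den : ℤ)) * hm.1
          + (2^n * ((S r1 s1 n)[0]'(hlen0 n)).num) * hm.2
    have hD0 : 0 < s1.num * (r1.den:ℤ) - r1.num * (s1.den:ℤ) := by
      have := (Rat.lt_iff _ _).mp hlt1; linarith
    have hbound : ∀ n : ℕ, (2:ℤ)^n ≤ s1.num * (r1.den:ℤ) - r1.num * (s1.den:ℤ) := by
      intro n
      have h := hdet n
      push_cast at h
      set e := ((S r1 s1 n)[1]'(hlen2 n)).num * (((S r1 s1 n)[0]'(hlen0 n)).den : ℤ)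
          - ((S r1 s1 n)[0]'(hlen0 n)).num * (((S r1 s1 n)[1]'(hlen2 n)).den : ℤ) with hedef
      have h2n : (0:ℤ) < 2^n := by positivity
      have he : 1 ≤ e := by
        by_contra hc
        push_neg at hc
        have he0 : e ≤ 0 := by omega
        have hnn := mul_nonneg h2n.le (neg_nonneg.mpr he0)
        linarith
      linarith [h, mul_le_mul_of_nonneg_left he h2n.le]
    set D0 := s1.num * (r1.den:ℤ) - r1.num * (s1.den:ℤ) with hD0def
    have hb := hbound D0.toNat
    have hlt : (D0.toNat : ℤ) < 2 ^ D0.toNat := by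
      have := Nat.lt_two_pow_self (n := D0.toNat)
      exact_mod_cast this
    have : D0 = (D0.toNat : ℤ) := (Int.toNat_of_nonneg hD0.le).symm
    linarith
  · -- main case
    obtain ⟨al, hal⟩ : ∃ al : ℤ, al = s1.num * (x.den:ℤ) - x.num * (s1.den:ℤ) := ⟨_, rfl⟩
    obtain ⟨be, hbe⟩ : ∃ be : ℤ, be = x.num * (r1.den:ℤ) - r1.num * (x.den:ℤ) := ⟨_, rfl⟩
    obtain ⟨M11, hM11⟩ : ∃ m : ℤ, m = r2.num * (s1.den:ℤ) - s2.num * (r1.den:ℤ) := ⟨_, rfl⟩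
    obtain ⟨M12, hM12⟩ : ∃ m : ℤ, m = s2.num * r1.num - r2.num * s1.num := ⟨_, rfl⟩
    obtain ⟨M21, hM21⟩ : ∃ m : ℤ, m = (r2.den:ℤ) * (s1.den:ℤ) - (s2.den:ℤ) * (r1.den:ℤ) := ⟨_, rfl⟩
    obtain ⟨M22, hM22⟩ : ∃ m : ℤ, m = (s2.den:ℤ) * r1.num - (r2.den:ℤ) * s1.num := ⟨_, rfl⟩
    obtain ⟨t, ht⟩ : ∃ m : ℤ, m = r1.num * (s1.den:ℤ) - (r1.den:ℤ) * s1.num := ⟨_, rfl⟩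
    obtain ⟨D2, hD2⟩ : ∃ m : ℤ, m = r2.num * (s2.den:ℤ) - (r2.den:ℤ) * s2.num := ⟨_, rfl⟩
    obtain ⟨nu, hnu⟩ : ∃ m : ℤ, m = al * r2.num + be * s2.num := ⟨_, rfl⟩
    obtain ⟨de, hde⟩ : ∃ m : ℤ, m = al * (r2.den:ℤ) + be * (s2.den:ℤ) := ⟨_, rfl⟩
    have hal0 : 0 ≤ al := by
      have := (Rat.le_iff _ _).mp hx2; rw [hal]; linarith
    have hbe0 : 0 ≤ be := by
      have := (Rat.le_iff _ _).mp hx1; rw [hbe]; linarith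
    have htneg : t < 0 := by
      have := (Rat.lt_iff _ _).mp hlt1; rw [ht]; linarith
    have hD2neg : D2 < 0 := by
      have := (Rat.lt_iff _ _).mp hlt2; rw [hD2]; linarith
    have hxd : (0:ℤ) < (x.den:ℤ) := by exact_mod_cast x.pos
    have hb1 : (0:ℤ) < (r1.den:ℤ) := by exact_mod_cast r1.pos
    have hd1 : (0:ℤ) < (s1.den:ℤ) := by exact_mod_cast s1.pos
    have hb2 : (0:ℤ) < (r2.den:ℤ) := by exact_mod_cast r2.pos
    have hd2 : (0:ℤ) < (s2.den:ℤ) := by exact_mod_cast s2.pos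
    have hsum : al * (r1.den:ℤ) + be * (s1.den:ℤ) = (-t) * (x.den:ℤ) := by
      rw [hal, hbe, ht]; ring
    have hcase : 0 < al ∨ 0 < be := by
      by_contra hc
      push_neg at hc
      have hal' : al = 0 := le_antisymm hc.1 hal0
      have hbe' : be = 0 := le_antisymm hc.2 hbe0
      rw [hal', hbe'] at hsum
      nlinarith [mul_pos (neg_pos.mpr htneg) hxd]
    have hdpos : 0 < de := by
      rw [hde]
      rcases hcase with h | h
      · nlinarith [mul_pos h hb2, mul_nonneg hbe0 hd2.le]
      · nlinarith [mul_nonneg hal0 hb2.le, mul_pos h hd2]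
    obtain ⟨y, hy⟩ : ∃ y : ℚ, y = (nu:ℚ)/(de:ℚ) := ⟨_, rfl⟩
    have hdeQ : (0:ℚ) < (de:ℚ) := by exact_mod_cast hdpos
    have hr2y : r2 ≤ y := by
      rw [hy]
      rw [show r2 = ((r2.num:ℤ):ℚ) / ((r2.den:ℕ):ℚ) from (Rat.num_div_den r2).symm]
      rw [div_le_div_iff₀ (by exact_mod_cast r2.pos) hdeQ]
      have key : r2.num * de ≤ nu * (r2.den:ℤ) := by
        have h2 := (Rat.le_iff _ _).mp hrs2
        rw [hnu, hde]
        nlinarith [mul_nonneg hbe0 (sub_nonneg.mpr h2)]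
      exact_mod_cast key
    have hys2 : y ≤ s2 := by
      rw [hy]
      rw [show s2 = ((s2.num:ℤ):ℚ) / ((s2.den:ℕ):ℚ) from (Rat.num_div_den s2).symm]
      rw [div_le_div_iff₀ hdeQ (by exact_mod_cast s2.pos)]
      have key : nu * (s2.den:ℤ) ≤ s2.num * de := by
        have h2 := (Rat.le_iff _ _).mp hrs2
        rw [hnu, hde]
        nlinarith [mul_nonneg hal0 (sub_nonneg.mpr h2)]
      exact_mod_cast key
    obtain ⟨n, hyn⟩ := hT2 y hr2y hys2
    obtain ⟨j, hj, hEy⟩ := List.mem_iff_getElem.mp hyn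
    have hj1 : j < (S r1 s1 n).length := by
      rw [lenS r1 s1 n]; rw [lenS r2 s2 n] at hj; omega
    have hinv := invariant r1 s1 r2 s2 hequiv M11 M12 M21 M22 t
      (by rw [hM11, hM12, ht]; ring) (by rw [hM21, hM22, ht]; ring)
      (by rw [hM11, hM12, ht]; ring) (by rw [hM21, hM22, ht]; ring)
      n j hj1 hj
    rw [hEy] at hinv
    have hyden : ((y.den:ℤ):ℚ) ≠ 0 := by
      exact_mod_cast (Int.natCast_pos.mpr y.pos).ne'
    have F3 : y.num * de = nu * (y.den:ℤ) := by
      have h0 : ((y.num:ℤ):ℚ) / ((y.den:ℕ):ℚ) = (nu:ℚ)/(de:ℚ) := by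
        rw [Rat.num_div_den]; exact hy
      rw [div_eq_div_iff (by exact_mod_cast y.pos.ne' : ((y.den:ℕ):ℚ) ≠ 0) hdeQ.ne'] at h0
      exact_mod_cast h0
    have G1 : (-t) * (M11 * x.num + M12 * (x.den:ℤ)) = t * nu := by
      rw [ht, hM11, hM12, hnu, hal, hbe]; ring
    have G2 : (-t) * (M21 * x.num + M22 * (x.den:ℤ)) = t * de := by
      rw [ht, hM21, hM22, hde, hal, hbe]; ring
    have hdet : M11 * M22 - M12 * M21 = t * D2 := by
      rw [hM11, hM12, hM21, hM22, ht, hD2]; ring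
    have hfin := cancel_lemma M11 M12 M21 M22 t x.num (x.den:ℤ)
      ((S r1 s1 n)[j]'hj1).num (((S r1 s1 n)[j]'hj1).den : ℤ)
      y.num (y.den:ℤ) nu de D2 htneg.ne hD2neg.ne hdet G1 G2 hinv.1 hinv.2 F3
    have hx : x = (S r1 s1 n)[j]'hj1 := (rat_eq_iff _ _).mpr hfin
    exact ⟨n, hx ▸ List.getElem_mem hj1⟩
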